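/- Let g ∈ L¹_loc(ℝ^d) be such that N_1(g) < ∞, and suppose g is a limit in the seminorm N_1 of a sequence of trigonometric polynomials. Then the mean value M(g) := lim_{R→∞} R^{-d} ∫_{C_R} g(x) dx exists, and |M(g)| ≤ N_1(g). -/

import Mathlib

open MeasureTheory Filter

open Topology

/-- The cube `C_R = {x : max_i |x i| ≤ R/2}`. -/
def cube (d : ℕ) (R : ℝ) : Set (Fin d → ℝ) := {x | ∀ i, |x i| ≤ R / 2}

/-- The Besicovitch seminorm `N_1`. -/
noncomputable def N1 (d : ℕ) (g : (Fin d → ℝ) → ℂ) : ℝ :=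
  Filter.limsup (fun R : ℝ => (R ^ d)⁻¹ * ∫ x in cube d R, ‖g x‖) Filter.atTop

/-- A trigonometric polynomial: a finite sum `Σ_{λ∈Λ} a_λ e^{2πiλ·x}`. -/
def IsTrigPoly (d : ℕ) (P : (Fin d → ℝ) → ℂ) : Prop :=
  ∃ (Λ : Finset (Fin d → ℝ)) (a : (Fin d → ℝ) → ℂ),
    ∀ x, P x = ∑ lam ∈ Λ,
      a lam * Complex.exp (2 * Real.pi * Complex.I * ((∑ i, lam i * x i : ℝ) : ℂ))

lemma cube_eq (d : ℕ) (R : ℝ) :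
    cube d R = Set.pi Set.univ (fun _ : Fin d => Set.Icc (-(R/2)) (R/2)) := by
  ext x
  simp only [cube, Set.mem_setOf_eq, Set.mem_pi, Set.mem_univ, forall_true_left, Set.mem_Icc,
    abs_le, true_implies]

lemma isCompact_cube (d : ℕ) (R : ℝ) : IsCompact (cube d R) := by
  rw [cube_eq]; exact isCompact_univ_pi fun _ => isCompact_Icc

lemma measurableSet_cube (d : ℕ) (R : ℝ) : MeasurableSet (cube d R) :=
  (isCompact_cube d R).isClosed.measurableSet

lemma volume_cube (d : ℕ) {R : ℝ} (hR : 0 ≤ R) :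
    (volume (cube d R)).toReal = R ^ d := by
  rw [cube_eq, volume_pi_pi]
  have : R / 2 - (-(R/2)) = R := by ring
  simp [Real.volume_Icc, this, ENNReal.toReal_pow, ENNReal.toReal_ofReal hR]

lemma norm_exp_aux (c t : ℝ) : ‖Complex.exp (2 * (Real.pi:ℂ) * Complex.I * c * t)‖ = 1 := by
  rw [Complex.norm_exp]
  have h : (2 * (Real.pi:ℂ) * Complex.I * c * t).re = 0 := by
    simp [Complex.mul_re, Complex.mul_im]
  rw [h, Real.exp_zero]

lemma oneDim (c : ℝ) : ∃ l : ℂ, Tendsto (fun R : ℝ =>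
    (R:ℂ)⁻¹ * ∫ t in Set.Icc (-(R/2)) (R/2), Complex.exp (2 * Real.pi * Complex.I * c * t))
    atTop (𝓝 l) := by
  by_cases hc : c = 0
  · refine ⟨1, ?_⟩
    have h : ∀ᶠ R : ℝ in atTop, (1 : ℂ) =
        (R:ℂ)⁻¹ * ∫ t in Set.Icc (-(R/2)) (R/2), Complex.exp (2 * Real.pi * Complex.I * c * t) := by
      filter_upwards [eventually_gt_atTop 0] with R hR
      have hR' : ((R:ℂ)) ≠ 0 := by exact_mod_cast hR.ne'
      subst hc
      simp only [Complex.ofReal_zero, mul_zero, zero_mul, Complex.exp_zero]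
      rw [setIntegral_const, measureReal_def, Real.volume_Icc]
      have h2 : R / 2 - (-(R/2)) = R := by ring
      rw [h2, ENNReal.toReal_ofReal hR.le, Complex.real_smul, mul_one, inv_mul_cancel₀ hR']
    exact Tendsto.congr' h tendsto_const_nhds
  · refine ⟨0, ?_⟩
    set k : ℂ := 2 * Real.pi * Complex.I * c with hk
    have hk0 : k ≠ 0 := by
      simp only [hk]
      refine mul_ne_zero (mul_ne_zero (mul_ne_zero two_ne_zero ?_) Complex.I_ne_zero) ?_
      · exact_mod_cast Real.pi_ne_zero
      · exact_mod_cast hc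
    apply squeeze_zero_norm' (a := fun R : ℝ => R⁻¹ * (2 / ‖k‖)) ?_ ?_
    · filter_upwards [eventually_gt_atTop 0] with R hR
      have hle : -(R/2) ≤ R/2 := by linarith
      have hI : (∫ t in Set.Icc (-(R/2)) (R/2), Complex.exp (2 * Real.pi * Complex.I * c * t))
          = (Complex.exp (k * ((R/2 : ℝ):ℂ)) - Complex.exp (k * ((-(R/2) : ℝ):ℂ))) / k := by
        rw [MeasureTheory.integral_Icc_eq_integral_Ioc, ← intervalIntegral.integral_of_le hle,
          ← integral_exp_mul_complex hk0]
      rw [hI, norm_mul]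
      have e1 : ‖Complex.exp (k * ((R/2 : ℝ):ℂ))‖ = 1 := by
        rw [hk]; exact norm_exp_aux c (R/2)
      have e2 : ‖Complex.exp (k * ((-(R/2) : ℝ):ℂ))‖ = 1 := by
        rw [hk]; exact norm_exp_aux c (-(R/2))
      have hb : ‖(Complex.exp (k * ((R/2 : ℝ):ℂ)) - Complex.exp (k * ((-(R/2) : ℝ):ℂ))) / k‖
          ≤ 2 / ‖k‖ := by
        rw [norm_div]
        gcongr
        calc ‖_ - _‖ ≤ _ + _ := norm_sub_le _ _
          _ = 2 := by rw [e1, e2]; norm_num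
      have hn : ‖((R:ℂ))⁻¹‖ = R⁻¹ := by
        rw [norm_inv, Complex.norm_real, Real.norm_eq_abs, abs_of_pos hR]
      rw [hn]
      exact mul_le_mul_of_nonneg_left hb (inv_nonneg.2 hR.le)
    · have h3 : Tendsto (fun R : ℝ => R⁻¹ * (2 / ‖k‖)) atTop (𝓝 (0 * (2 / ‖k‖))) :=
        tendsto_inv_atTop_zero.mul_const _
      simpa using h3

lemma exp_mean (d : ℕ) (lam : Fin d → ℝ) : ∃ l : ℂ,
    Tendsto (fun R : ℝ => (R ^ d : ℝ)⁻¹ • ∫ x in cube d R,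
      Complex.exp (2 * Real.pi * Complex.I * ((∑ i, lam i * x i : ℝ) : ℂ))) atTop (𝓝 l) := by
  choose l hl using fun i : Fin d => oneDim (lam i)
  refine ⟨∏ i, l i, ?_⟩
  have h2 : Tendsto (fun R : ℝ => ∏ i, ((R:ℂ)⁻¹ *
      ∫ t in Set.Icc (-(R/2)) (R/2), Complex.exp (2 * Real.pi * Complex.I * (lam i) * t)))
      atTop (𝓝 (∏ i, l i)) :=
    tendsto_finset_prod _ fun i _ => hl i
  refine Tendsto.congr' ?_ h2
  filter_upwards [eventually_gt_atTop 0] with R hR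
  have key : (∫ x in cube d R, Complex.exp (2 * Real.pi * Complex.I * ((∑ i, lam i * x i : ℝ) : ℂ)))
      = ∏ i, ∫ t in Set.Icc (-(R/2)) (R/2), Complex.exp (2 * Real.pi * Complex.I * (lam i) * t) := by
    have h1 : ∀ x : Fin d → ℝ,
        (cube d R).indicator
          (fun x : Fin d → ℝ => Complex.exp (2 * Real.pi * Complex.I * ((∑ i, lam i * x i : ℝ) : ℂ))) x
        = ∏ i, (Set.Icc (-(R/2)) (R/2)).indicator
            (fun t : ℝ => Complex.exp (2 * Real.pi * Complex.I * (lam i) * t)) (x i) := by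
      intro x
      by_cases hx : x ∈ cube d R
      · rw [Set.indicator_of_mem hx]
        have hxi : ∀ i, x i ∈ Set.Icc (-(R/2)) (R/2) := by
          intro i; rw [Set.mem_Icc, ← abs_le]; exact hx i
        rw [Finset.prod_congr rfl (fun i _ => Set.indicator_of_mem (hxi i) _), ← Complex.exp_sum]
        congr 1
        push_cast
        rw [Finset.mul_sum]
        exact Finset.sum_congr rfl fun i _ => by ring
      · rw [Set.indicator_of_notMem hx]
        simp only [cube, Set.mem_setOf_eq, not_forall, not_le] at hx
        obtain ⟨i, hi⟩ := hx
        have hni : x i ∉ Set.Icc (-(R/2)) (R/2) := by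
          rw [Set.mem_Icc, ← abs_le]; exact not_le.2 hi
        exact (Finset.prod_eq_zero (Finset.mem_univ i) (Set.indicator_of_notMem hni _)).symm
    rw [← integral_indicator (measurableSet_cube d R)]
    calc ∫ x : Fin d → ℝ, (cube d R).indicator _ x
        = ∫ x : Fin d → ℝ, ∏ i, (Set.Icc (-(R/2)) (R/2)).indicator
            (fun t : ℝ => Complex.exp (2 * Real.pi * Complex.I * (lam i) * t)) (x i) := by
          exact integral_congr_ae (Filter.Eventually.of_forall h1)
      _ = ∏ i, ∫ t : ℝ, (Set.Icc (-(R/2)) (R/2)).indicator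
            (fun t : ℝ => Complex.exp (2 * Real.pi * Complex.I * (lam i) * t)) t :=
          MeasureTheory.integral_fintype_prod_eq_prod
            (fun i (t : ℝ) => (Set.Icc (-(R/2)) (R/2)).indicator
              (fun t : ℝ => Complex.exp (2 * Real.pi * Complex.I * (lam i) * t)) t)
      _ = ∏ i, ∫ t in Set.Icc (-(R/2)) (R/2), Complex.exp (2 * Real.pi * Complex.I * (lam i) * t) :=
          Finset.prod_congr rfl fun i _ => integral_indicator measurableSet_Icc
  rw [key, Finset.prod_mul_distrib, Finset.prod_const, Complex.real_smul]
  congr 1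
  push_cast
  rw [Finset.card_univ, Fintype.card_fin, inv_pow]

lemma cont_exp_mean (d : ℕ) (lam : Fin d → ℝ) :
    Continuous fun x : Fin d → ℝ =>
      Complex.exp (2 * Real.pi * Complex.I * ((∑ i, lam i * x i : ℝ) : ℂ)) := by
  fun_prop

lemma trig_cont (d : ℕ) (P : (Fin d → ℝ) → ℂ) (hP : IsTrigPoly d P) : Continuous P := by
  obtain ⟨Λ, a, ha⟩ := hP
  have : P = fun x => ∑ lam ∈ Λ,
      a lam * Complex.exp (2 * Real.pi * Complex.I * ((∑ i, lam i * x i : ℝ) : ℂ)) := funext ha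
  rw [this]
  exact continuous_finset_sum _ fun lam _ => continuous_const.mul (cont_exp_mean d lam)

lemma trig_bound (d : ℕ) (P : (Fin d → ℝ) → ℂ) (hP : IsTrigPoly d P) :
    ∃ C : ℝ, 0 ≤ C ∧ ∀ x, ‖P x‖ ≤ C := by
  obtain ⟨Λ, a, ha⟩ := hP
  refine ⟨∑ lam ∈ Λ, ‖a lam‖, Finset.sum_nonneg fun _ _ => norm_nonneg _, fun x => ?_⟩
  rw [ha x]
  refine (norm_sum_le _ _).trans (Finset.sum_le_sum fun lam _ => ?_)
  rw [norm_mul]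
  have h1 : ‖Complex.exp (2 * Real.pi * Complex.I * ((∑ i, lam i * x i : ℝ) : ℂ))‖ = 1 := by
    rw [Complex.norm_exp]
    have h : (2 * (Real.pi:ℂ) * Complex.I * ((∑ i, lam i * x i : ℝ) : ℂ)).re = 0 := by
      simp [Complex.mul_re, Complex.mul_im]
    rw [h, Real.exp_zero]
  rw [h1, mul_one]

lemma trig_mean (d : ℕ) (P : (Fin d → ℝ) → ℂ) (hP : IsTrigPoly d P) :
    ∃ c : ℂ, Tendsto (fun R : ℝ => (R ^ d : ℝ)⁻¹ • ∫ x in cube d R, P x) atTop (𝓝 c) := by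
  obtain ⟨Λ, a, ha⟩ := hP
  choose l hl using fun lam : Fin d → ℝ => exp_mean d lam
  refine ⟨∑ lam ∈ Λ, a lam * l lam, ?_⟩
  have h2 : Tendsto (fun R : ℝ => ∑ lam ∈ Λ, a lam * ((R ^ d : ℝ)⁻¹ • ∫ x in cube d R,
      Complex.exp (2 * Real.pi * Complex.I * ((∑ i, lam i * x i : ℝ) : ℂ))))
      atTop (𝓝 (∑ lam ∈ Λ, a lam * l lam)) :=
    tendsto_finset_sum _ fun lam _ => (hl lam).const_mul _
  refine Tendsto.congr' ?_ h2
  filter_upwards with R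
  have hint : ∀ lam : Fin d → ℝ, IntegrableOn
      (fun x : Fin d → ℝ => Complex.exp (2 * Real.pi * Complex.I * ((∑ i, lam i * x i : ℝ) : ℂ)))
      (cube d R) volume :=
    fun lam => ((cont_exp_mean d lam).locallyIntegrable).integrableOn_isCompact
      (isCompact_cube d R)
  have hPi : ∫ x in cube d R, P x = ∑ lam ∈ Λ, a lam * ∫ x in cube d R,
      Complex.exp (2 * Real.pi * Complex.I * ((∑ i, lam i * x i : ℝ) : ℂ)) := by
    rw [setIntegral_congr_fun (by
      exact ((isCompact_cube d R).isClosed.measurableSet)) (fun x _ => ha x)]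
    rw [integral_finset_sum _ fun lam _ => ((hint lam).const_mul _)]
    exact Finset.sum_congr rfl fun lam _ => MeasureTheory.integral_const_mul _ _
  rw [hPi, Finset.smul_sum]
  exact Finset.sum_congr rfl fun lam _ => mul_smul_comm _ _ _

/-- If `g` is locally integrable, `N_1(g)` is finite (the averages are eventually bounded), and
`g` is an `N_1`-limit of trigonometric polynomials, then the mean value
`M(g) = lim_{R→∞} R^{-d} ∫_{C_R} g` exists and `|M(g)| ≤ N_1(g)`. -/
theorem mean_value_exists (d : ℕ) (g : (Fin d → ℝ) → ℂ)
    (hloc : LocallyIntegrable g volume)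
    (hfin : ∃ B : ℝ, ∀ᶠ R in Filter.atTop, (R ^ d : ℝ)⁻¹ * (∫ x in cube d R, ‖g x‖) ≤ B)
    (happrox : ∃ P : ℕ → (Fin d → ℝ) → ℂ, (∀ n, IsTrigPoly d (P n)) ∧
      Filter.Tendsto (fun n => N1 d (fun x => g x - P n x)) Filter.atTop (nhds 0)) :
    ∃ Mg : ℂ,
      Filter.Tendsto (fun R : ℝ => (R ^ d : ℝ)⁻¹ • ∫ x in cube d R, g x)
        Filter.atTop (nhds Mg) ∧ ‖Mg‖ ≤ N1 d g := by
  obtain ⟨B, hB⟩ := hfin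
  obtain ⟨P, hPtrig, hPlim⟩ := happrox
  have hgint : ∀ R : ℝ, IntegrableOn g (cube d R) volume :=
    fun R => hloc.integrableOn_isCompact (isCompact_cube d R)
  have hPint : ∀ n (R : ℝ), IntegrableOn (P n) (cube d R) volume := fun n R =>
    ((trig_cont d (P n) (hPtrig n)).locallyIntegrable).integrableOn_isCompact (isCompact_cube d R)
  set F : ℝ → ℂ := fun R => (R ^ d : ℝ)⁻¹ • ∫ x in cube d R, g x with hF
  set A : ℕ → ℝ → ℂ := fun n R => (R ^ d : ℝ)⁻¹ • ∫ x in cube d R, P n x with hA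
  set h : ℕ → ℝ → ℝ := fun n R => (R ^ d : ℝ)⁻¹ * ∫ x in cube d R, ‖g x - P n x‖ with hh
  have hdiff : ∀ n, ∀ R : ℝ, 0 < R → dist (F R) (A n R) ≤ h n R := by
    intro n R hR
    rw [dist_eq_norm, hF, hA, hh]
    dsimp only
    rw [← smul_sub, ← integral_sub (hgint R) (hPint n R), norm_smul, Real.norm_eq_abs,
      abs_of_nonneg (inv_nonneg.2 (pow_nonneg hR.le d))]
    exact mul_le_mul_of_nonneg_left (norm_integral_le_integral_norm _)
      (inv_nonneg.2 (pow_nonneg hR.le d))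
  have hbdd : ∀ n, IsBoundedUnder (· ≤ ·) atTop (h n) := by
    intro n
    obtain ⟨C, hC0, hCb⟩ := trig_bound d (P n) (hPtrig n)
    refine ⟨B + C, ?_⟩
    rw [eventually_map]
    filter_upwards [hB, eventually_gt_atTop 0] with R hBR hR
    have hRd : (0:ℝ) < R ^ d := pow_pos hR d
    have h1 : ∫ x in cube d R, ‖g x - P n x‖ ≤ (∫ x in cube d R, ‖g x‖) + C * R ^ d := by
      have i1 : IntegrableOn (fun x => ‖g x - P n x‖) (cube d R) volume :=
        ((hgint R).sub (hPint n R)).norm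
      have i2 : IntegrableOn (fun x => ‖g x‖ + C) (cube d R) volume :=
        (hgint R).norm.add (integrableOn_const (isCompact_cube d R).measure_lt_top.ne)
      calc ∫ x in cube d R, ‖g x - P n x‖ ≤ ∫ x in cube d R, (‖g x‖ + C) :=
            setIntegral_mono_on i1 i2 (measurableSet_cube d R) (fun x _ =>
              (norm_sub_le _ _).trans (by gcongr; exact hCb x))
        _ = (∫ x in cube d R, ‖g x‖) + C * R ^ d := by
            rw [integral_add (hgint R).norm
              (integrableOn_const (isCompact_cube d R).measure_lt_top.ne),
              setIntegral_const, measureReal_def, volume_cube d hR.le, smul_eq_mul, mul_comm]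
    calc h n R ≤ (R ^ d)⁻¹ * ((∫ x in cube d R, ‖g x‖) + C * R ^ d) := by
          rw [hh]; exact mul_le_mul_of_nonneg_left h1 (inv_nonneg.2 hRd.le)
      _ = (R ^ d)⁻¹ * (∫ x in cube d R, ‖g x‖) + C := by field_simp
      _ ≤ B + C := by linarith [hBR]
  have hN1 : ∀ n, N1 d (fun x => g x - P n x) = limsup (h n) atTop := fun n => rfl
  have hcauchy : CauchySeq F := by
    rw [Metric.cauchySeq_iff']
    intro ε hε
    have h4 : (0:ℝ) < ε/4 := by linarith
    obtain ⟨n, hn⟩ := (hPlim.eventually (gt_mem_nhds h4)).exists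
    have hsmall : ∀ᶠ R in atTop, h n R < ε/4 :=
      eventually_lt_of_limsup_lt (by rw [← hN1 n]; exact hn) (hbdd n)
    obtain ⟨c, hc⟩ := trig_mean d (P n) (hPtrig n)
    have hAc : ∀ᶠ R in atTop, dist (A n R) c < ε/4 :=
      Metric.tendsto_nhds.1 hc (ε/4) h4
    obtain ⟨N, hN⟩ := eventually_atTop.1 (hsmall.and (hAc.and (eventually_gt_atTop 0)))
    refine ⟨N, fun R hR => ?_⟩
    obtain ⟨h1R, h2R, h3R⟩ := hN R hR
    obtain ⟨h1N, h2N, h3N⟩ := hN N le_rfl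
    have t1 : dist (F R) (F N) ≤ dist (F R) (A n R) + dist (A n R) (A n N) + dist (A n N) (F N) :=
      dist_triangle4 _ _ _ _
    have t2 : dist (A n R) (A n N) ≤ dist (A n R) c + dist c (A n N) := dist_triangle _ _ _
    have e1 : dist (F R) (A n R) < ε/4 := (hdiff n R h3R).trans_lt h1R
    have e4 : dist (A n N) (F N) < ε/4 := by
      rw [dist_comm]; exact (hdiff n N h3N).trans_lt h1N
    have e3 : dist c (A n N) < ε/4 := by rw [dist_comm]; exact h2N
    linarith
  obtain ⟨Mg, hMg⟩ := cauchySeq_tendsto_of_complete hcauchy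
  refine ⟨Mg, hMg, ?_⟩
  have h1 : Tendsto (fun R => ‖F R‖) atTop (𝓝 ‖Mg‖) := hMg.norm
  have h2 : limsup (fun R => ‖F R‖) atTop = ‖Mg‖ := h1.limsup_eq
  rw [← h2]
  have hev2 : (fun R => ‖F R‖) ≤ᶠ[atTop]
      fun R : ℝ => (R ^ d)⁻¹ * ∫ x in cube d R, ‖g x‖ := by
    filter_upwards [eventually_gt_atTop 0] with R hR
    rw [hF]
    dsimp only
    rw [norm_smul, Real.norm_eq_abs, abs_of_nonneg (inv_nonneg.2 (pow_nonneg hR.le d))]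
    exact mul_le_mul_of_nonneg_left (norm_integral_le_integral_norm _)
      (inv_nonneg.2 (pow_nonneg hR.le d))
  exact limsup_le_limsup hev2 h1.isBoundedUnder_ge.isCoboundedUnder_le
    ⟨B, by rw [eventually_map]; exact hB⟩
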